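/- Let V = (F_2)^n = V₁ ⊕ ⋯ ⊕ V_b with bricks of dimension s, and let ρ₁, …, ρ_r be permutations of V with 0ρᵢ = 0 and ρᵢ = γᵢλᵢ, where each γᵢ is a parallel S-box whose S-boxes are 2^δ-differentially uniform (δ < s) and strongly (δ−1)-anti-invariant, and each λᵢ is a linear strongly-proper diffusion layer (no wall W, W′ satisfies Wλᵢ = W′). Suppose there exist non-trivial proper subgroups 𝒰ᵢ ≤ V × V (1 ≤ i ≤ r+1) such that the Feistel operator ρ̄ᵢ maps the coset partition 𝓛(𝒰ᵢ) onto 𝓛(𝒰_{i+1}) for each i. Then there is no index 1 ≤ i ≤ r−1 such that ρ̄_{i+1} maps 𝓛(𝒰_{i+1}) onto 𝓛(𝒰ᵢ). -/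

import Mathlib

/-- A brick `(𝔽₂)ˢ`. -/
abbrev Brick (s : ℕ) := Fin s → ZMod 2

/-- The space `V = V₁ ⊕ ⋯ ⊕ V_b` with `b` bricks of dimension `s`. -/
abbrev Vbs (b s : ℕ) := Fin b → Brick s

/-- The parallel S-box applying `γ j` to the `j`-th brick. -/
def parallel {b s : ℕ} (γ : ∀ _ : Fin b, Equiv.Perm (Brick s)) :
    Vbs b s → Vbs b s :=
  fun x j => γ j (x j)

/-- A wall: the direct sum of the bricks indexed by a proper non-empty subset. -/
def IsWall {b s : ℕ} (U : Submodule (ZMod 2) (Vbs b s)) : Prop :=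
  ∃ I : Set (Fin b), I.Nonempty ∧ I ≠ Set.univ ∧
    (U : Set (Vbs b s)) = {x | ∀ j ∉ I, x j = 0}

/-- `f` is `δ'`-differentially uniform: every nonzero input difference yields
each output difference at most `δ'` times. -/
def DiffUniform {s : ℕ} (f : Brick s → Brick s) (δ' : ℕ) : Prop :=
  ∀ a c : Brick s, a ≠ 0 → Nat.card {x : Brick s | f (x + a) + f x = c} ≤ δ'

/-- `f` is strongly `δ`-anti-invariant: whenever `f` maps a proper non-trivial
subspace `U` onto a proper non-trivial subspace `W`, then
`dim U = dim W < s - δ`. -/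
def StronglyAntiInvariant {s : ℕ} (f : Brick s → Brick s) (δ : ℕ) : Prop :=
  ∀ U W : Submodule (ZMod 2) (Brick s), U ≠ ⊥ → U ≠ ⊤ → W ≠ ⊥ → W ≠ ⊤ →
    f '' (U : Set (Brick s)) = (W : Set (Brick s)) →
    Module.finrank (ZMod 2) U = Module.finrank (ZMod 2) W ∧
      Module.finrank (ZMod 2) U < s - δ

/-- `f` maps the partition into cosets of `U` onto the partition into cosets
of `W`. -/
def MapsLinearPartition {α : Type*} [Add α] (f : α → α) (U W : Set α) : Prop :=
  (fun S => f '' S) '' (Set.range fun v => (fun x => x + v) '' U) =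
    Set.range fun w => (fun x => x + w) '' W

/-- The Feistel operator `(x₁, x₂) ↦ (x₂, x₁ + ρ x₂)` on `V × V`. -/
def feistel {b s : ℕ} (ρ : Equiv.Perm (Vbs b s)) :
    Vbs b s × Vbs b s → Vbs b s × Vbs b s :=
  fun x => (x.2, x.1 + ρ x.2)

namespace Aux

lemma zmod2_neg (a : ZMod 2) : -a = a := by revert a; decide

lemma neg_self {α : Type*} [AddCommGroup α] (h : ∀ x : α, -x = x) : True := trivial

-- char two facts for our concrete spaces
lemma negV {b s : ℕ} (x : Vbs b s) : -x = x := by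
  funext j k; exact zmod2_neg _

lemma negP {b s : ℕ} (x : Vbs b s × Vbs b s) : -x = x := by
  cases x with
  | mk a c => simp [Prod.neg_mk, negV]

lemma addV_self {b s : ℕ} (x : Vbs b s) : x + x = 0 := by
  have := neg_add_cancel x
  rwa [negV] at this

lemma addP_self {b s : ℕ} (x : Vbs b s × Vbs b s) : x + x = 0 := by
  have := neg_add_cancel x
  rwa [negP] at this

lemma eq_of_addV {b s : ℕ} {x y : Vbs b s} (h : x + y = 0) : x = y := by
  have := congrArg (· + y) h
  simpa [add_assoc, addV_self] using this

-- block image lemma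
lemma block_image {α : Type*} [AddCommGroup α] (hneg : ∀ x : α, -x = x)
    (f : α → α) (hf0 : f 0 = 0) {U W : AddSubgroup α}
    (h : MapsLinearPartition f (U : Set α) (W : Set α)) :
    f '' (U : Set α) = (W : Set α) := by
  have hU : ((fun x => x + (0:α)) '' (U : Set α)) = (U : Set α) := by
    simp
  have hmem : f '' (U : Set α) ∈
      (fun S => f '' S) '' (Set.range fun v => (fun x => x + v) '' (U : Set α)) := by
    exact ⟨(U : Set α), ⟨0, hU⟩, rfl⟩
  rw [h] at hmem
  obtain ⟨w, hw⟩ := hmem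
  have h0mem : (0:α) ∈ f '' (U : Set α) := ⟨0, U.zero_mem, hf0⟩
  rw [← hw] at h0mem
  obtain ⟨ω, hω, hωw⟩ := h0mem
  have hwW : w ∈ W := by
    have : w = -ω := by rw [eq_neg_iff_add_eq_zero, add_comm]; exact hωw
    rw [this]; exact W.neg_mem hω
  rw [← hw]
  ext y
  constructor
  · rintro ⟨x, hx, rfl⟩; exact W.add_mem hx hwW
  · intro hy
    refine ⟨y - w, ?_, by simp⟩
    exact W.sub_mem hy hwW

lemma deriv_mem {α : Type*} [AddCommGroup α] (hneg : ∀ x : α, -x = x)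
    (f : α → α) {U W : AddSubgroup α}
    (h : MapsLinearPartition f (U : Set α) (W : Set α)) :
    ∀ u ∈ U, ∀ z, f (z + u) + f z ∈ W := by
  intro u hu z
  have hmem : f '' ((fun x => x + z) '' (U : Set α)) ∈
      (fun S => f '' S) '' (Set.range fun v => (fun x => x + v) '' (U : Set α)) :=
    ⟨_, ⟨z, rfl⟩, rfl⟩
  rw [h] at hmem
  obtain ⟨w, hw⟩ := hmem
  have hw2 : (fun x => x + w) '' (W : Set α) = f '' ((fun x => x + z) '' (U : Set α)) := hw
  have h1 : f (z + u) ∈ (fun x => x + w) '' (W : Set α) := by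
    rw [hw2]; exact ⟨u + z, ⟨u, hu, rfl⟩, by rw [add_comm]⟩
  have h2 : f z ∈ (fun x => x + w) '' (W : Set α) := by
    rw [hw2]; exact ⟨0 + z, ⟨0, U.zero_mem, rfl⟩, by simp⟩
  obtain ⟨ω₁, hω₁, he₁⟩ := h1
  obtain ⟨ω₂, hω₂, he₂⟩ := h2
  have hww : w + w = 0 := by
    have := neg_add_cancel w
    rwa [hneg] at this
  have : f (z + u) + f z = ω₁ + ω₂ := by
    rw [← he₁, ← he₂]
    show (ω₁ + w) + (ω₂ + w) = ω₁ + ω₂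
    rw [add_add_add_comm, hww, add_zero]
  rw [this]; exact W.add_mem hω₁ hω₂

end Aux

namespace Aux2
open Aux

variable {s : ℕ}

lemma card_brick (s : ℕ) : Fintype.card (Brick s) = 2 ^ s := by
  simp [Brick]

lemma natcard_set_eq_filter (P : Brick s → Prop) [DecidablePred P] :
    Nat.card {x : Brick s | P x} = (Finset.univ.filter P).card := by
  rw [Nat.card_coe_set_eq]
  rw [Set.ncard_eq_toFinset_card']
  congr 1
  ext x
  simp

/-- nonconstancy of derivatives -/
lemma deriv_nonconst {δ : ℕ} (hδ : δ < s) (g : Brick s → Brick s)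
    (hdu : DiffUniform g (2 ^ δ)) {a : Brick s} (ha : a ≠ 0) :
    ∃ x x' : Brick s, g (x + a) + g x ≠ g (x' + a) + g x' := by
  by_contra hcon
  push_neg at hcon
  have hconst : ∀ x : Brick s, g (x + a) + g x = g (0 + a) + g 0 := fun x => hcon x 0
  have := hdu a (g (0 + a) + g 0) ha
  classical
  rw [natcard_set_eq_filter] at this
  have : (Finset.univ.filter fun x : Brick s => g (x + a) + g x = g (0 + a) + g 0).card
      = 2 ^ s := by
    rw [Finset.filter_true_of_mem (fun x _ => hconst x), Finset.card_univ, card_brick]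
  have hlt : (2:ℕ)^δ < 2^s := Nat.pow_lt_pow_right (by norm_num) hδ
  omega

/-- lower bound on the number of derivative values -/
lemma deriv_range_card {δ : ℕ} (hδs : δ ≤ s) (g : Brick s → Brick s)
    (hdu : DiffUniform g (2 ^ δ)) {a : Brick s} (ha : a ≠ 0) :
    2 ^ (s - δ) ≤ (Set.range fun x : Brick s => g (x + a) + g x).ncard := by
  classical
  set F : Brick s → Brick s := fun x => g (x + a) + g x with hF
  have hfil : ∀ c ∈ Finset.univ.image F,
      (Finset.univ.filter fun x => F x = c).card ≤ 2 ^ δ := by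
    intro c _
    have := hdu a c ha
    rw [natcard_set_eq_filter] at this
    exact this
  have hcard := Finset.card_le_mul_card_image (f := F) Finset.univ (2 ^ δ) hfil
  rw [Finset.card_univ, card_brick] at hcard
  have himg : (Set.range F) = ↑(Finset.univ.image F) := by
    ext c; simp [Finset.mem_image, eq_comm]
  rw [himg, Set.ncard_coe_finset]
  have h2 : 2 ^ s = 2 ^ δ * 2 ^ (s - δ) := by
    rw [← pow_add]
    congr 1
    omega
  rw [h2] at hcard
  have hpos : 0 < 2 ^ δ := Nat.pow_pos (by norm_num)
  exact Nat.le_of_mul_le_mul_left hcard hpos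

/-- turn an AddSubgroup of a ZMod 2 module into a Submodule -/
def toSub {M : Type*} [AddCommGroup M] [Module (ZMod 2) M]
    (H : AddSubgroup M) : Submodule (ZMod 2) M where
  carrier := H
  add_mem' := H.add_mem
  zero_mem' := H.zero_mem
  smul_mem' := by
    intro c x hx
    have : c = 0 ∨ c = 1 := by revert c; decide
    rcases this with rfl | rfl
    · simpa using H.zero_mem
    · simpa using hx

lemma toSub_coe {M : Type*} [AddCommGroup M] [Module (ZMod 2) M]
    (H : AddSubgroup M) : ((toSub H : Submodule (ZMod 2) M) : Set M) = (H : Set M) := rfl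

lemma card_toSub (H : AddSubgroup (Brick s)) :
    Nat.card (toSub H) = 2 ^ (Module.finrank (ZMod 2) (toSub H)) := by
  haveI : Fintype (toSub H) := Fintype.ofFinite _
  have h1 : Nat.card (toSub H) = Fintype.card (toSub H) := Nat.card_eq_fintype_card
  rw [h1]
  have := Module.card_eq_pow_finrank (K := ZMod 2) (V := toSub H)
  rwa [ZMod.card] at this

lemma ncard_subgroup (H : AddSubgroup (Brick s)) :
    (H : Set (Brick s)).ncard = 2 ^ (Module.finrank (ZMod 2) (toSub H)) := by
  rw [← card_toSub H, ← Nat.card_coe_set_eq]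
  rfl

end Aux2

namespace Aux3
open Aux Aux2

variable {b s : ℕ}

lemma negB (x : Brick s) : -x = x := by funext k; exact zmod2_neg _

lemma addB_self (x : Brick s) : x + x = 0 := by
  have := neg_add_cancel x; rwa [negB] at this

lemma eq_of_addB {x y : Brick s} (h : x + y = 0) : x = y := by
  have := congrArg (· + y) h
  simpa [add_assoc, addB_self] using this

lemma swap_cancelV (u v : Vbs b s) : u + v + u = v := by
  rw [add_comm u v, add_assoc, addV_self, add_zero]

lemma swap_cancelB (u v : Brick s) : u + v + u = v := by
  rw [add_comm u v, add_assoc, addB_self, add_zero]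

/-- the subgroup `{t | (0,t) ∈ 𝒰}` -/
def Tgrp (𝒰 : AddSubgroup (Vbs b s × Vbs b s)) : AddSubgroup (Vbs b s) where
  carrier := {t | ((0 : Vbs b s), t) ∈ 𝒰}
  zero_mem' := by
    have := 𝒰.zero_mem
    exact this
  add_mem' := by
    intro a c ha hc
    have := 𝒰.add_mem ha hc
    simpa using this
  neg_mem' := by
    intro a ha
    have := 𝒰.neg_mem ha
    simpa [Prod.neg_mk, negV] using this

lemma mem_Tgrp {𝒰 : AddSubgroup (Vbs b s × Vbs b s)} {t : Vbs b s} :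
    t ∈ Tgrp 𝒰 ↔ ((0 : Vbs b s), t) ∈ 𝒰 := Iff.rfl

/-- the `j`-section of a subgroup of `V` -/
def secg (j : Fin b) (H : AddSubgroup (Vbs b s)) : AddSubgroup (Brick s) where
  carrier := {v | Pi.single j v ∈ H}
  zero_mem' := by simpa using H.zero_mem
  add_mem' := by
    intro a c ha hc
    have := H.add_mem ha hc
    simpa [← Pi.single_add] using this
  neg_mem' := by
    intro a ha
    simpa [negB] using ha

lemma mem_secg {j : Fin b} {H : AddSubgroup (Vbs b s)} {v : Brick s} :
    v ∈ secg j H ↔ Pi.single j v ∈ H := Iff.rfl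

lemma parallel_zero (γ : ∀ _ : Fin b, Equiv.Perm (Brick s)) (h0 : ∀ j, γ j 0 = 0) :
    parallel γ 0 = 0 := by
  funext j; simpa [parallel] using h0 j

lemma parallel_single (γ : ∀ _ : Fin b, Equiv.Perm (Brick s)) (h0 : ∀ j, γ j 0 = 0)
    (j : Fin b) (v : Brick s) : parallel γ (Pi.single j v) = Pi.single j (γ j v) := by
  funext k
  rcases eq_or_ne k j with rfl | hk
  · simp [parallel]
  · simp [parallel, Pi.single_eq_of_ne hk, h0]

lemma parallel_inj (γ : ∀ _ : Fin b, Equiv.Perm (Brick s)) :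
    Function.Injective (parallel γ) := by
  intro x y hxy
  funext j
  have : γ j (x j) = γ j (y j) := congrFun hxy j
  exact (γ j).injective this

lemma parallel_surj (γ : ∀ _ : Fin b, Equiv.Perm (Brick s)) :
    Function.Surjective (parallel γ) := by
  intro y
  exact ⟨fun j => (γ j).symm (y j), by funext j; simp [parallel]⟩

lemma parallel_wall (γ : ∀ _ : Fin b, Equiv.Perm (Brick s)) (h0 : ∀ j, γ j 0 = 0)
    (J : Set (Fin b)) :
    parallel γ '' {x : Vbs b s | ∀ j ∉ J, x j = 0} = {x : Vbs b s | ∀ j ∉ J, x j = 0} := by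
  ext y
  constructor
  · rintro ⟨x, hx, rfl⟩ j hj
    simp [parallel, hx j hj, h0]
  · intro hy
    refine ⟨fun j => (γ j).symm (y j), fun j hj => ?_, by funext j; simp [parallel]⟩
    show (γ j).symm (y j) = 0
    rw [hy j hj]
    exact ((γ j).symm_apply_eq).2 (h0 j).symm

/-- wall submodule -/
def WallSub (b s : ℕ) (J : Set (Fin b)) : Submodule (ZMod 2) (Vbs b s) where
  carrier := {x | ∀ j ∉ J, x j = 0}
  zero_mem' := by intro j _; rfl
  add_mem' := by
    intro a c ha hc j hj
    show a j + c j = 0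
    rw [ha j hj, hc j hj, add_zero]
  smul_mem' := by
    intro c x hx j hj
    show c • x j = 0
    rw [hx j hj, smul_zero]

lemma exists_ne_zero {α : Type*} [AddCommGroup α] {H : AddSubgroup α} (h : H ≠ ⊥) :
    ∃ x ∈ H, x ≠ 0 := by
  by_contra hcon
  push_neg at hcon
  exact h (by ext x; simp only [AddSubgroup.mem_bot]; exact ⟨fun hx => hcon x hx, fun hx => hx ▸ H.zero_mem⟩)

lemma toSub_ne_bot {M : Type*} [AddCommGroup M] [Module (ZMod 2) M]
    {H : AddSubgroup M} (h : ∃ x ∈ H, x ≠ 0) : toSub H ≠ ⊥ := by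
  obtain ⟨x, hx, hx0⟩ := h
  intro hc
  have : x ∈ toSub H := hx
  rw [hc] at this
  exact hx0 (by simpa using this)

lemma toSub_ne_top {M : Type*} [AddCommGroup M] [Module (ZMod 2) M]
    {H : AddSubgroup M} (h : ∃ x, x ∉ H) : toSub H ≠ ⊤ := by
  obtain ⟨x, hx⟩ := h
  intro hc
  have hmem : x ∈ toSub H := by rw [hc]; trivial
  exact hx hmem

end Aux3


namespace Main
open Aux Aux2 Aux3

lemma ne_top_exists {α : Type*} [AddCommGroup α] {H : AddSubgroup α} (h : H ≠ ⊤) :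
    ∃ x, x ∉ H := by
  by_contra hcon
  push_neg at hcon
  exact h (by ext x; simp [hcon x])

lemma wall_lemma {b s δ : ℕ} (hδ : δ < s)
    (γ γ' : ∀ _ : Fin b, Equiv.Perm (Brick s))
    (lm lm' : Vbs b s ≃ₗ[ZMod 2] Vbs b s)
    (h0 : ∀ j, γ j 0 = 0) (h0' : ∀ j, γ' j 0 = 0)
    (hdu : ∀ j, DiffUniform (γ j) (2 ^ δ)) (hdu' : ∀ j, DiffUniform (γ' j) (2 ^ δ))
    (hai : ∀ j, StronglyAntiInvariant (γ j) (δ - 1))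
    (𝒰 𝒲 : AddSubgroup (Vbs b s × Vbs b s))
    (hUb : 𝒰 ≠ ⊥) (hUt : 𝒰 ≠ ⊤) (hWb : 𝒲 ≠ ⊥) (hWt : 𝒲 ≠ ⊤)
    (hf : MapsLinearPartition (fun x => (x.2, x.1 + lm (parallel γ x.2)))
      (𝒰 : Set (Vbs b s × Vbs b s)) (𝒲 : Set (Vbs b s × Vbs b s)))
    (hf' : MapsLinearPartition (fun x => (x.2, x.1 + lm' (parallel γ' x.2)))
      (𝒲 : Set (Vbs b s × Vbs b s)) (𝒰 : Set (Vbs b s × Vbs b s))) :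
    ∃ J : Set (Fin b), J.Nonempty ∧ J ≠ Set.univ ∧
      ((Tgrp 𝒰 : AddSubgroup (Vbs b s)) : Set (Vbs b s)) = {x | ∀ j ∉ J, x j = 0} ∧
      (fun x => lm (parallel γ x)) '' ((Tgrp 𝒰 : AddSubgroup (Vbs b s)) : Set (Vbs b s))
        = ((Tgrp 𝒲 : AddSubgroup (Vbs b s)) : Set (Vbs b s)) := by
  classical
  set ρ : Vbs b s → Vbs b s := fun v => lm (parallel γ v) with hρdef
  set ρ2 : Vbs b s → Vbs b s := fun v => lm' (parallel γ' v) with hρ2def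
  have hρ0 : ρ 0 = 0 := by
    simp [hρdef, parallel_zero γ h0]
  have hρ20 : ρ2 0 = 0 := by
    simp [hρ2def, parallel_zero γ' h0']
  have hρinj : Function.Injective ρ := fun a c h => parallel_inj γ (lm.injective h)
  have hρ2inj : Function.Injective ρ2 := fun a c h => parallel_inj γ' (lm'.injective h)
  have hρsurj : Function.Surjective ρ := by
    intro y
    obtain ⟨x, hx⟩ := parallel_surj γ (lm.symm y)
    exact ⟨x, by simp [hρdef, hx]⟩
  -- the Feistel functions
  set f : Vbs b s × Vbs b s → Vbs b s × Vbs b s := fun x => (x.2, x.1 + ρ x.2) with hfdef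
  set f2 : Vbs b s × Vbs b s → Vbs b s × Vbs b s := fun x => (x.2, x.1 + ρ2 x.2) with hf2def
  have hf0 : f 0 = 0 := by simp [hfdef, hρ0]
  have hf20 : f2 0 = 0 := by simp [hf2def, hρ20]
  have hfU : f '' (𝒰 : Set (Vbs b s × Vbs b s)) = (𝒲 : Set (Vbs b s × Vbs b s)) :=
    block_image negP f hf0 hf
  have hfW : f2 '' (𝒲 : Set (Vbs b s × Vbs b s)) = (𝒰 : Set (Vbs b s × Vbs b s)) :=
    block_image negP f2 hf20 hf'
  have hderU : ∀ u ∈ 𝒰, ∀ z, f (z + u) + f z ∈ 𝒲 := deriv_mem negP f hf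
  have hderW : ∀ w ∈ 𝒲, ∀ z, f2 (z + w) + f2 z ∈ 𝒰 := deriv_mem negP f2 hf'
  -- membership facts
  have mem1 : ∀ t ∈ Tgrp 𝒰, ((t : Vbs b s), ρ t) ∈ 𝒲 := by
    intro t ht
    have : f ((0 : Vbs b s), t) ∈ f '' (𝒰 : Set _) := ⟨_, ht, rfl⟩
    rw [hfU] at this
    simpa [hfdef] using this
  have mem1' : ∀ t ∈ Tgrp 𝒲, ((t : Vbs b s), ρ2 t) ∈ 𝒰 := by
    intro t ht
    have : f2 ((0 : Vbs b s), t) ∈ f2 '' (𝒲 : Set _) := ⟨_, ht, rfl⟩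
    rw [hfW] at this
    simpa [hf2def] using this
  have mem2 : ∀ t ∈ Tgrp 𝒰, ((t : Vbs b s), (0 : Vbs b s)) ∈ 𝒲 := by
    intro t ht
    have ht' : ((0 : Vbs b s), t) ∈ f2 '' (𝒲 : Set _) := by rw [hfW]; exact ht
    obtain ⟨w, hw, he⟩ := ht'
    have he1 : w.2 = 0 := congrArg Prod.fst he
    have he2 : w.1 + ρ2 w.2 = t := congrArg Prod.snd he
    rw [he1, hρ20, add_zero] at he2
    have : w = (t, (0 : Vbs b s)) := Prod.ext he2 he1
    rwa [this] at hw
  have mem2' : ∀ t ∈ Tgrp 𝒲, ((t : Vbs b s), (0 : Vbs b s)) ∈ 𝒰 := by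
    intro t ht
    have ht' : ((0 : Vbs b s), t) ∈ f '' (𝒰 : Set _) := by rw [hfU]; exact ht
    obtain ⟨w, hw, he⟩ := ht'
    have he1 : w.2 = 0 := congrArg Prod.fst he
    have he2 : w.1 + ρ w.2 = t := congrArg Prod.snd he
    rw [he1, hρ0, add_zero] at he2
    have : w = (t, (0 : Vbs b s)) := Prod.ext he2 he1
    rwa [this] at hw
  -- ρ maps T(𝒰) into T(𝒲)
  have hsubT : ∀ t ∈ Tgrp 𝒰, ρ t ∈ Tgrp 𝒲 := by
    intro t ht
    have h1 := mem1 t ht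
    have h2 := mem2 t ht
    have := 𝒲.add_mem h1 h2
    simpa [Prod.mk_add_mk, addV_self, mem_Tgrp] using this
  have hsubT' : ∀ t ∈ Tgrp 𝒲, ρ2 t ∈ Tgrp 𝒰 := by
    intro t ht
    have h1 := mem1' t ht
    have h2 := mem2' t ht
    have := 𝒰.add_mem h1 h2
    simpa [Prod.mk_add_mk, addV_self, mem_Tgrp] using this
  -- ρ '' T(𝒰) = T(𝒲)
  have tmap : ρ '' ((Tgrp 𝒰 : AddSubgroup (Vbs b s)) : Set (Vbs b s))
      = ((Tgrp 𝒲 : AddSubgroup (Vbs b s)) : Set (Vbs b s)) := by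
    have h1 : ρ '' ((Tgrp 𝒰 : AddSubgroup _) : Set _) ⊆ ((Tgrp 𝒲 : AddSubgroup _) : Set _) := by
      rintro _ ⟨t, ht, rfl⟩; exact hsubT t ht
    have h2 : ρ2 '' ((Tgrp 𝒲 : AddSubgroup _) : Set _) ⊆ ((Tgrp 𝒰 : AddSubgroup _) : Set _) := by
      rintro _ ⟨t, ht, rfl⟩; exact hsubT' t ht
    apply Set.eq_of_subset_of_ncard_le h1 _ (Set.toFinite _)
    calc ((Tgrp 𝒲 : AddSubgroup (Vbs b s)) : Set (Vbs b s)).ncard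
        = (ρ2 '' ((Tgrp 𝒲 : AddSubgroup _) : Set _)).ncard :=
          (Set.ncard_image_of_injective _ hρ2inj).symm
      _ ≤ ((Tgrp 𝒰 : AddSubgroup _) : Set _).ncard := Set.ncard_le_ncard h2 (Set.toFinite _)
      _ = (ρ '' ((Tgrp 𝒰 : AddSubgroup _) : Set _)).ncard :=
          (Set.ncard_image_of_injective _ hρinj).symm
  -- derivative facts in pair form
  have derivPairU : ∀ u ∈ 𝒰, ∀ z₂ : Vbs b s,
      ((u.2 : Vbs b s), u.1 + (ρ (z₂ + u.2) + ρ z₂)) ∈ 𝒲 := by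
    intro u hu z₂
    have h := hderU u hu ((0 : Vbs b s), z₂)
    have he : f (((0 : Vbs b s), z₂) + u) + f ((0 : Vbs b s), z₂)
        = (u.2, u.1 + (ρ (z₂ + u.2) + ρ z₂)) := by
      show ((z₂ + u.2) + z₂, ((0 + u.1) + ρ (z₂ + u.2)) + (0 + ρ z₂)) = _
      refine Prod.ext (swap_cancelV z₂ u.2) ?_
      simp [add_assoc]
    rwa [he] at h
  have derivPairW : ∀ w ∈ 𝒲, ∀ z₂ : Vbs b s,
      ((w.2 : Vbs b s), w.1 + (ρ2 (z₂ + w.2) + ρ2 z₂)) ∈ 𝒰 := by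
    intro w hw z₂
    have h := hderW w hw ((0 : Vbs b s), z₂)
    have he : f2 (((0 : Vbs b s), z₂) + w) + f2 ((0 : Vbs b s), z₂)
        = (w.2, w.1 + (ρ2 (z₂ + w.2) + ρ2 z₂)) := by
      show ((z₂ + w.2) + z₂, ((0 + w.1) + ρ2 (z₂ + w.2)) + (0 + ρ2 z₂)) = _
      refine Prod.ext (swap_cancelV z₂ w.2) ?_
      simp [add_assoc]
    rwa [he] at h
  have diffU : ∀ u ∈ 𝒰, ∀ z₂ z₂' : Vbs b s,
      (ρ (z₂ + u.2) + ρ z₂) + (ρ (z₂' + u.2) + ρ z₂') ∈ Tgrp 𝒲 := by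
    intro u hu z₂ z₂'
    have h1 := derivPairU u hu z₂
    have h2 := derivPairU u hu z₂'
    have := 𝒲.add_mem h1 h2
    rw [Prod.mk_add_mk, addV_self, add_add_add_comm, addV_self, zero_add] at this
    exact this
  have diffW : ∀ w ∈ 𝒲, ∀ z₂ z₂' : Vbs b s,
      (ρ2 (z₂ + w.2) + ρ2 z₂) + (ρ2 (z₂' + w.2) + ρ2 z₂') ∈ Tgrp 𝒰 := by
    intro w hw z₂ z₂'
    have h1 := derivPairW w hw z₂
    have h2 := derivPairW w hw z₂'
    have := 𝒰.add_mem h1 h2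
    rw [Prod.mk_add_mk, addV_self, add_add_add_comm, addV_self, zero_add] at this
    exact this
  -- T(𝒰) is non-trivial
  have TUne0 : ∃ t ∈ Tgrp 𝒰, t ≠ 0 := by
    obtain ⟨w, hw, hw0⟩ := exists_ne_zero hWb
    by_cases hw2 : w.2 = 0
    · have hw1 : w.1 ≠ 0 := by
        intro h1
        exact hw0 (Prod.ext h1 hw2)
      refine ⟨w.1, ?_, hw1⟩
      have : f2 w ∈ f2 '' (𝒲 : Set _) := ⟨w, hw, rfl⟩
      rw [hfW] at this
      have he : f2 w = ((0 : Vbs b s), w.1) := by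
        show (w.2, w.1 + ρ2 w.2) = _
        rw [hw2, hρ20, add_zero]
      rwa [he] at this
    · obtain ⟨j, hj⟩ : ∃ j, w.2 j ≠ 0 := by
        by_contra hcon
        push_neg at hcon
        exact hw2 (funext hcon)
      obtain ⟨x, x', hxx⟩ := deriv_nonconst hδ (γ' j) (hdu' j) hj
      set z₂ : Vbs b s := Pi.single j x with hz₂
      set z₂' : Vbs b s := Pi.single j x' with hz₂'
      refine ⟨_, diffW w hw z₂ z₂', ?_⟩
      intro hzero
      have hY : (ρ2 (z₂ + w.2) + ρ2 z₂) + (ρ2 (z₂' + w.2) + ρ2 z₂')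
          = lm' ((parallel γ' (z₂ + w.2) + parallel γ' z₂)
            + (parallel γ' (z₂' + w.2) + parallel γ' z₂')) := by
        simp [hρ2def, map_add]
      rw [hY] at hzero
      have hY0 : (parallel γ' (z₂ + w.2) + parallel γ' z₂)
          + (parallel γ' (z₂' + w.2) + parallel γ' z₂') = 0 :=
        lm'.injective (by simpa using hzero)
      have hYj := congrFun hY0 j
      have hco : (γ' j (x + w.2 j) + γ' j x) + (γ' j (x' + w.2 j) + γ' j x')
          = (0 : Brick s) := by
        simpa [parallel, hz₂, hz₂'] using hYj
      exact hxx (eq_of_addB hco)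
  -- T(𝒰) is proper
  have TUnetop : ((Tgrp 𝒰 : AddSubgroup (Vbs b s)) : Set (Vbs b s)) ≠ Set.univ := by
    intro htop
    apply hWt
    ext z
    simp only [AddSubgroup.mem_top, iff_true]
    have hTUuniv : ∀ v : Vbs b s, v ∈ Tgrp 𝒰 := by
      intro v
      have : v ∈ ((Tgrp 𝒰 : AddSubgroup (Vbs b s)) : Set (Vbs b s)) := by rw [htop]; trivial
      exact this
    have hz1 : (z.1, ρ z.1) ∈ 𝒲 := mem1 z.1 (hTUuniv z.1)
    have hz2 : ((0 : Vbs b s), ρ z.1 + z.2) ∈ 𝒲 := by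
      have : ρ z.1 + z.2 ∈ Tgrp 𝒲 := by
        obtain ⟨x, hx⟩ := hρsurj (ρ z.1 + z.2)
        rw [← hx]
        exact hsubT x (hTUuniv x)
      exact this
    have := 𝒲.add_mem hz1 hz2
    have he : ((z.1 : Vbs b s), ρ z.1) + ((0 : Vbs b s), ρ z.1 + z.2) = z := by
      rw [Prod.mk_add_mk, add_zero, ← add_assoc, addV_self, zero_add]
    rwa [he] at this
  -- the preimage subgroup P with parallel γ '' T(𝒰) = P
  set P : AddSubgroup (Vbs b s) :=
    AddSubgroup.comap lm.toLinearMap.toAddMonoidHom (Tgrp 𝒲) with hPdef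
  have hmemP : ∀ v : Vbs b s, v ∈ P ↔ lm v ∈ Tgrp 𝒲 := by
    intro v
    rw [hPdef]
    rfl
  have hγTU : parallel γ '' ((Tgrp 𝒰 : AddSubgroup (Vbs b s)) : Set (Vbs b s))
      = ((P : AddSubgroup (Vbs b s)) : Set (Vbs b s)) := by
    ext p
    constructor
    · rintro ⟨t, ht, rfl⟩
      have : ρ t ∈ Tgrp 𝒲 := hsubT t ht
      exact (hmemP _).2 this
    · intro hp
      have : lm p ∈ ((Tgrp 𝒲 : AddSubgroup (Vbs b s)) : Set (Vbs b s)) := (hmemP p).1 hp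
      rw [← tmap] at this
      obtain ⟨t, ht, hte⟩ := this
      exact ⟨t, ht, lm.injective hte⟩
  -- section subgroups
  have haj : ∀ j : Fin b, ⇑(γ j) '' ((secg j (Tgrp 𝒰) : AddSubgroup (Brick s)) : Set (Brick s))
      = ((secg j P : AddSubgroup (Brick s)) : Set (Brick s)) := by
    intro j
    ext v
    constructor
    · rintro ⟨q, hq, rfl⟩
      have h1 : parallel γ (Pi.single j q) ∈ ((P : AddSubgroup _) : Set _) := by
        rw [← hγTU]
        exact ⟨Pi.single j q, hq, rfl⟩
      rw [parallel_single γ h0] at h1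
      exact h1
    · intro hv
      have hv2 : v ∈ secg j P := hv
      have hv3 : Pi.single j v ∈ P := hv2
      have h1 : Pi.single j v ∈ ((P : AddSubgroup (Vbs b s)) : Set (Vbs b s)) := hv3
      rw [← hγTU] at h1
      obtain ⟨t, ht, hte⟩ := h1
      have htk : ∀ k, k ≠ j → t k = 0 := by
        intro k hk
        have : γ k (t k) = 0 := by
          have := congrFun hte k
          simpa [parallel, Pi.single_eq_of_ne hk] using this
        have h2 : γ k (t k) = γ k 0 := by rw [this, h0 k]
        exact (γ k).injective h2
      have hts : t = Pi.single j (t j) := by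
        funext k
        rcases eq_or_ne k j with rfl | hk
        · simp
        · simp [Pi.single_eq_of_ne hk, htk k hk]
      refine ⟨t j, ?_, ?_⟩
      · show Pi.single j (t j) ∈ Tgrp 𝒰
        rw [← hts]; exact ht
      · have := congrFun hte j
        simpa [parallel] using this
  have hbj : ∀ j : Fin b, ∀ q ∈ secg j (Tgrp 𝒰), ∀ x : Brick s,
      γ j (x + q) + γ j x + γ j q ∈ secg j P := by
    intro j q hq x
    have hu : ((0 : Vbs b s), Pi.single j q) ∈ 𝒰 := hq
    have h1 : ((Pi.single j q : Vbs b s),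
        (0 : Vbs b s) + (ρ (Pi.single j x + Pi.single j q) + ρ (Pi.single j x))) ∈ 𝒲 :=
      derivPairU _ hu (Pi.single j x)
    rw [zero_add] at h1
    have h2 := mem1 (Pi.single j q) hq
    have h3 := 𝒲.add_mem h1 h2
    rw [Prod.mk_add_mk, addV_self] at h3
    have hTW : ρ (Pi.single j x + Pi.single j q) + ρ (Pi.single j x) + ρ (Pi.single j q)
        ∈ Tgrp 𝒲 := h3
    have e1 : (Pi.single j x + Pi.single j q : Vbs b s) = Pi.single j (x + q) := by
      funext k
      rcases eq_or_ne k j with rfl | hk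
      · simp
      · simp [Pi.single_eq_of_ne hk]
    rw [e1] at hTW
    have hlm : ρ (Pi.single j (x + q)) + ρ (Pi.single j x) + ρ (Pi.single j q)
        = lm (parallel γ (Pi.single j (x + q)) + parallel γ (Pi.single j x)
          + parallel γ (Pi.single j q)) := by
      simp [hρdef, map_add]
    rw [hlm] at hTW
    have hP2 : parallel γ (Pi.single j (x + q)) + parallel γ (Pi.single j x)
        + parallel γ (Pi.single j q) ∈ P := (hmemP _).2 hTW
    rw [parallel_single γ h0, parallel_single γ h0, parallel_single γ h0] at hP2
    have e2 : (Pi.single j (γ j (x + q)) + Pi.single j (γ j x) + Pi.single j (γ j q) : Vbs b s)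
        = Pi.single j (γ j (x + q) + γ j x + γ j q) := by
      funext k
      rcases eq_or_ne k j with rfl | hk
      · simp
      · simp [Pi.single_eq_of_ne hk]
    rw [e2] at hP2
    exact hP2
  have hcj : ∀ j : Fin b, ∀ t ∈ Tgrp 𝒰, t j ≠ 0 → ∃ v ∈ secg j P, v ≠ 0 := by
    intro j t ht htj
    obtain ⟨x, x', hxx⟩ := deriv_nonconst hδ (γ j) (hdu j) htj
    have hu : ((0 : Vbs b s), t) ∈ 𝒰 := ht
    have hd : (ρ (Pi.single j x + t) + ρ (Pi.single j x))
        + (ρ (Pi.single j x' + t) + ρ (Pi.single j x')) ∈ Tgrp 𝒲 :=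
      diffU _ hu (Pi.single j x) (Pi.single j x')
    have hlm : (ρ (Pi.single j x + t) + ρ (Pi.single j x))
        + (ρ (Pi.single j x' + t) + ρ (Pi.single j x'))
        = lm ((parallel γ (Pi.single j x + t) + parallel γ (Pi.single j x))
            + (parallel γ (Pi.single j x' + t) + parallel γ (Pi.single j x'))) := by
      simp [hρdef, map_add]
    rw [hlm] at hd
    have hP2 : (parallel γ (Pi.single j x + t) + parallel γ (Pi.single j x))
        + (parallel γ (Pi.single j x' + t) + parallel γ (Pi.single j x')) ∈ P := (hmemP _).2 hd
    have hsingle : (parallel γ (Pi.single j x + t) + parallel γ (Pi.single j x))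
        + (parallel γ (Pi.single j x' + t) + parallel γ (Pi.single j x'))
        = Pi.single j ((γ j (x + t j) + γ j x) + (γ j (x' + t j) + γ j x')) := by
      funext k
      rcases eq_or_ne k j with rfl | hk
      · simp [parallel]
      · simp [parallel, Pi.single_eq_of_ne hk, h0 k, addB_self]
    rw [hsingle] at hP2
    refine ⟨_, hP2, ?_⟩
    intro h0c
    exact hxx (eq_of_addB h0c)
  -- the section subgroups are trivial or full
  have hdj : ∀ j : Fin b, secg j (Tgrp 𝒰) = ⊥ ∨ secg j (Tgrp 𝒰) = ⊤ := by
    intro j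
    by_contra hcon
    push_neg at hcon
    obtain ⟨hRb, hRt⟩ := hcon
    obtain ⟨q, hq, hq0⟩ := exists_ne_zero hRb
    have hqP : γ j q ∈ secg j P := by
      have h1 : γ j q ∈ ⇑(γ j) '' ((secg j (Tgrp 𝒰) : AddSubgroup (Brick s)) : Set (Brick s)) :=
        ⟨q, hq, rfl⟩
      rw [haj j] at h1
      exact h1
    have hPb : ∃ v ∈ secg j P, v ≠ 0 := by
      refine ⟨γ j q, hqP, ?_⟩
      intro h
      apply hq0
      apply (γ j).injective
      rw [h, h0 j]
    have hPt : ∃ v, v ∉ secg j P := by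
      obtain ⟨x, hx⟩ := ne_top_exists hRt
      refine ⟨γ j x, ?_⟩
      intro hmem
      apply hx
      have h1 : γ j x ∈ ((secg j P : AddSubgroup (Brick s)) : Set (Brick s)) := hmem
      rw [← haj j] at h1
      obtain ⟨v, hv, hve⟩ := h1
      have : v = x := (γ j).injective hve
      rwa [← this]
    have hRbS : toSub (secg j (Tgrp 𝒰)) ≠ ⊥ := toSub_ne_bot (exists_ne_zero hRb)
    have hRtS : toSub (secg j (Tgrp 𝒰)) ≠ ⊤ := toSub_ne_top (ne_top_exists hRt)
    have hPbS : toSub (secg j P) ≠ ⊥ := toSub_ne_bot hPb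
    have hPtS : toSub (secg j P) ≠ ⊤ := toSub_ne_top hPt
    have himg : ⇑(γ j) '' ((toSub (secg j (Tgrp 𝒰)) : Submodule (ZMod 2) (Brick s)) : Set (Brick s))
        = ((toSub (secg j P) : Submodule (ZMod 2) (Brick s)) : Set (Brick s)) := haj j
    obtain ⟨hfr1, hfr2⟩ := hai j _ _ hRbS hRtS hPbS hPtS himg
    have hdRle : Module.finrank (ZMod 2) (toSub (secg j (Tgrp 𝒰))) ≤ s - δ := by
      rcases Nat.eq_zero_or_pos δ with h | h
      · have hle : Module.finrank (ZMod 2) (toSub (secg j (Tgrp 𝒰)))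
            ≤ Module.finrank (ZMod 2) (Brick s) := Submodule.finrank_le _
        have hfs : Module.finrank (ZMod 2) (Brick s) = s := by
          rw [Module.finrank_pi]
          simp
        omega
      · omega
    set D := Set.range (fun x : Brick s => γ j (x + q) + γ j x) with hD
    have hDsub : D ⊆ (fun p => γ j q + p) '' ((secg j P : AddSubgroup (Brick s)) : Set (Brick s)) := by
      rintro _ ⟨x, rfl⟩
      refine ⟨γ j (x + q) + γ j x + γ j q, hbj j q hq x, ?_⟩
      show γ j q + (γ j (x + q) + γ j x + γ j q) = γ j (x + q) + γ j x
      calc γ j q + (γ j (x + q) + γ j x + γ j q)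
          = γ j q + (γ j q + (γ j (x + q) + γ j x)) := by rw [add_comm (γ j (x + q) + γ j x)]
        _ = (γ j q + γ j q) + (γ j (x + q) + γ j x) := (add_assoc _ _ _).symm
        _ = γ j (x + q) + γ j x := by rw [addB_self, zero_add]
    have hc1 : ((fun p => γ j q + p) '' ((secg j P : AddSubgroup (Brick s)) : Set (Brick s))).ncard
        = 2 ^ Module.finrank (ZMod 2) (toSub (secg j (Tgrp 𝒰))) := by
      rw [Set.ncard_image_of_injective _ (add_right_injective (γ j q)), ncard_subgroup, hfr1]
    have hDge : 2 ^ (s - δ) ≤ D.ncard := deriv_range_card (Nat.le_of_lt hδ) (γ j) (hdu j) hq0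
    have hcosle : ((fun p => γ j q + p)
        '' ((secg j P : AddSubgroup (Brick s)) : Set (Brick s))).ncard ≤ D.ncard := by
      rw [hc1]
      have h2 : (2:ℕ) ^ Module.finrank (ZMod 2) (toSub (secg j (Tgrp 𝒰))) ≤ 2 ^ (s - δ) :=
        Nat.pow_le_pow_right (by norm_num) hdRle
      omega
    have hDeq := Set.eq_of_subset_of_ncard_le hDsub hcosle (Set.toFinite _)
    have h0mem : (0 : Brick s) ∈ D := by
      rw [hDeq]
      exact ⟨γ j q, hqP, addB_self _⟩
    obtain ⟨x, hx⟩ := h0mem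
    have h1 : γ j (x + q) = γ j x := eq_of_addB hx
    have h2 : x + q = x := (γ j).injective h1
    exact hq0 (by rwa [add_eq_left] at h2)
  -- full sections
  have hfull : ∀ j : Fin b, (∃ t ∈ Tgrp 𝒰, t j ≠ 0) → ∀ v : Brick s, Pi.single j v ∈ Tgrp 𝒰 := by
    intro j hj v
    obtain ⟨c, hc, hc0⟩ := hcj j _ hj.choose_spec.1 hj.choose_spec.2
    have hRne : secg j (Tgrp 𝒰) ≠ ⊥ := by
      intro hbot
      have h1 : c ∈ ((secg j P : AddSubgroup (Brick s)) : Set (Brick s)) := hc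
      rw [← haj j, hbot] at h1
      obtain ⟨v', hv', hve⟩ := h1
      have : v' = 0 := hv'
      rw [this, h0 j] at hve
      exact hc0 hve.symm
    have hRtop : secg j (Tgrp 𝒰) = ⊤ := (hdj j).resolve_left hRne
    have : v ∈ secg j (Tgrp 𝒰) := by rw [hRtop]; trivial
    exact this
  have hwallmem : ∀ x : Vbs b s, (∀ j, (¬ ∃ t ∈ Tgrp 𝒰, t j ≠ 0) → x j = 0) → x ∈ Tgrp 𝒰 := by
    intro x hx
    have hsum : x = ∑ j : Fin b, Pi.single j (x j) := (Finset.univ_sum_single x).symm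
    rw [hsum]
    apply AddSubgroup.sum_mem
    intro j _
    by_cases hxj : x j = 0
    · rw [hxj, Pi.single_zero]
      exact (Tgrp 𝒰).zero_mem
    · refine hfull j ?_ (x j)
      by_contra hnj
      exact hxj (hx j hnj)
  -- the wall
  refine ⟨{j | ∃ t ∈ Tgrp 𝒰, t j ≠ 0}, ?_, ?_, ?_, tmap⟩
  · obtain ⟨t, ht, ht0⟩ := TUne0
    obtain ⟨j, hj⟩ : ∃ j, t j ≠ 0 := by
      by_contra hcon
      push_neg at hcon
      exact ht0 (funext hcon)
    exact ⟨j, t, ht, hj⟩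
  · intro huniv
    apply TUnetop
    apply Set.eq_univ_of_forall
    intro x
    refine hwallmem x ?_
    intro j hj
    exact absurd (Set.eq_univ_iff_forall.mp huniv j) hj
  · ext x
    constructor
    · intro hx j hj
      by_contra h
      exact hj ⟨x, hx, h⟩
    · intro hx
      exact hwallmem x hx

end Main

/-- Consider an `r`-round Feistel network whose `i`-th generating function is
`ρᵢ = γᵢλᵢ` with `γᵢ` a parallel S-box whose S-boxes are `2^δ`-differentially
uniform and strongly `(δ-1)`-anti-invariant, and `λᵢ` a strongly-proper linear
diffusion layer. If there are non-trivial proper subgroups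
`𝒰₁, …, 𝒰_{r+1} ≤ V × V` such that the `i`-th Feistel operator maps the coset
partition `𝓛(𝒰ᵢ)` onto `𝓛(𝒰_{i+1})`, then there is no `1 ≤ i ≤ r - 1` such
that the `(i+1)`-th Feistel operator maps `𝓛(𝒰_{i+1})` onto `𝓛(𝒰ᵢ)`. -/
theorem stmt_19 (b s δ r : ℕ) (hδ : δ < s)
    (ρ : ℕ → Equiv.Perm (Vbs b s))
    (γ : ℕ → ∀ _ : Fin b, Equiv.Perm (Brick s))
    (lam : ℕ → (Vbs b s ≃ₗ[ZMod 2] Vbs b s))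
    (hcomp : ∀ i, 1 ≤ i → i ≤ r → ∀ x, ρ i x = lam i (parallel (γ i) x))
    (h0 : ∀ i, 1 ≤ i → i ≤ r → ∀ j, γ i j 0 = 0)
    (hdu : ∀ i, 1 ≤ i → i ≤ r → ∀ j, DiffUniform (γ i j) (2 ^ δ))
    (hai : ∀ i, 1 ≤ i → i ≤ r → ∀ j, StronglyAntiInvariant (γ i j) (δ - 1))
    (hlam : ∀ i, 1 ≤ i → i ≤ r → ∀ U W : Submodule (ZMod 2) (Vbs b s),
      IsWall U → IsWall W →
        (fun x => lam i x) '' (U : Set (Vbs b s)) ≠ (W : Set (Vbs b s)))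
    (𝒰 : ℕ → AddSubgroup (Vbs b s × Vbs b s))
    (h𝒰 : ∀ i, 1 ≤ i → i ≤ r + 1 → 𝒰 i ≠ ⊥ ∧ 𝒰 i ≠ ⊤)
    (hmaps : ∀ i, 1 ≤ i → i ≤ r →
      MapsLinearPartition (feistel (ρ i))
        ((𝒰 i : Set (Vbs b s × Vbs b s))) ((𝒰 (i + 1) : Set (Vbs b s × Vbs b s)))) :
    ¬ ∃ i, 1 ≤ i ∧ i ≤ r - 1 ∧
      MapsLinearPartition (feistel (ρ (i + 1)))
        ((𝒰 (i + 1) : Set (Vbs b s × Vbs b s))) ((𝒰 i : Set (Vbs b s × Vbs b s))) := by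
  rintro ⟨i, hi1, hir, hback⟩
  have hile : i ≤ r := by omega
  have hi1le : i + 1 ≤ r := by omega
  have h1i : (1:ℕ) ≤ i := hi1
  have h1i1 : (1:ℕ) ≤ i + 1 := by omega
  have hfe : ∀ k, 1 ≤ k → k ≤ r → feistel (ρ k)
      = fun x : Vbs b s × Vbs b s => (x.2, x.1 + lam k (parallel (γ k) x.2)) := by
    intro k hk1 hk2
    funext x
    simp [feistel, hcomp k hk1 hk2]
  have hmi := hmaps i h1i hile
  rw [hfe i h1i hile] at hmi
  have hbk := hback
  rw [hfe (i+1) h1i1 hi1le] at hbk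
  obtain ⟨hUb, hUt⟩ := h𝒰 i h1i (by omega)
  obtain ⟨hWb, hWt⟩ := h𝒰 (i+1) h1i1 (by omega)
  obtain ⟨J, hJne, hJnu, hJwall, hJmap⟩ := Main.wall_lemma hδ (γ i) (γ (i+1)) (lam i)
    (lam (i+1)) (h0 i h1i hile) (h0 (i+1) h1i1 hi1le) (hdu i h1i hile)
    (hdu (i+1) h1i1 hi1le) (hai i h1i hile) (𝒰 i) (𝒰 (i+1)) hUb hUt hWb hWt hmi hbk
  obtain ⟨K, hKne, hKnu, hKwall, -⟩ := Main.wall_lemma hδ (γ (i+1)) (γ i) (lam (i+1))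
    (lam i) (h0 (i+1) h1i1 hi1le) (h0 i h1i hile) (hdu (i+1) h1i1 hi1le)
    (hdu i h1i hile) (hai (i+1) h1i1 hi1le) (𝒰 (i+1)) (𝒰 i) hWb hWt hUb hUt hbk hmi
  apply hlam i h1i hile (Aux3.WallSub b s J) (Aux3.WallSub b s K)
    ⟨J, hJne, hJnu, rfl⟩ ⟨K, hKne, hKnu, rfl⟩
  have hW1 : ((Aux3.WallSub b s J : Submodule (ZMod 2) (Vbs b s)) : Set (Vbs b s))
      = {x : Vbs b s | ∀ j ∉ J, x j = 0} := rfl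
  calc (fun x => lam i x) '' ((Aux3.WallSub b s J : Submodule (ZMod 2) (Vbs b s)) : Set (Vbs b s))
      = (fun x => lam i x) '' (parallel (γ i) '' {x : Vbs b s | ∀ j ∉ J, x j = 0}) := by
        rw [hW1, Aux3.parallel_wall (γ i) (h0 i h1i hile) J]
    _ = (fun x => lam i (parallel (γ i) x)) '' {x : Vbs b s | ∀ j ∉ J, x j = 0} := by
        rw [Set.image_image]
    _ = (fun x => lam i (parallel (γ i) x)) ''
          ((Aux3.Tgrp (𝒰 i) : AddSubgroup (Vbs b s)) : Set (Vbs b s)) := by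
        rw [hJwall]
    _ = ((Aux3.Tgrp (𝒰 (i+1)) : AddSubgroup (Vbs b s)) : Set (Vbs b s)) := hJmap
    _ = ((Aux3.WallSub b s K : Submodule (ZMod 2) (Vbs b s)) : Set (Vbs b s)) := by
        rw [hKwall]; rfl
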